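/- Let F be a finite (or compact) family of real Lipschitz functions on [0,1], uniformly bounded by C, such that ∫₀^{1/2} f < ∫_{1/2}^1 f for every f ∈ F. Then there exist M and ε > 0 such that for all integers m > M, all integers m* with (1/2 − ε)m < m* < (1/2 + ε)m, and all f ∈ F: ∑_{j=1}^{m*} f(j/m)/(log(j+3))² < ∑_{j=m*+1}^{m} f(j/m)/(log(j+3))². -/

import Mathlib

set_option maxHeartbeats 1000000
open Finset Filter

lemma log_m3_tendsto : Tendsto (fun m : ℕ => Real.log ((m:ℝ) + 3)) atTop atTop :=
  Real.tendsto_log_atTop.comp (tendsto_atTop_add_const_right atTop 3 tendsto_natCast_atTop_atTop)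

lemma log_ratio_tendsto : Tendsto (fun x : ℝ => (Real.log 2 + 3 * Real.log x) / x) atTop (nhds 0) := by
  have h1 : Tendsto (fun x : ℝ => Real.log 2 / x) atTop (nhds 0) :=
    tendsto_const_nhds.div_atTop tendsto_id
  have h2 : Tendsto (fun x : ℝ => Real.log x / x) atTop (nhds 0) :=
    Real.isLittleO_log_id_atTop.tendsto_div_nhds_zero
  have := h1.add ((h2.const_mul 3))
  simp only [add_zero, mul_zero] at this
  refine this.congr (fun x => ?_)
  ring

noncomputable def ww (j : ℕ) : ℝ := 1 / (Real.log ((j:ℝ) + 3)) ^ 2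

lemma log_j3_pos (j : ℕ) : 1 < Real.log ((j:ℝ) + 3) := by
  have h0 : (0:ℝ) ≤ (j:ℝ) := j.cast_nonneg
  have h3 : (3:ℝ) ≤ (j:ℝ) + 3 := by linarith
  calc (1:ℝ) < Real.log 3 := by
        rw [Real.lt_log_iff_exp_lt (by norm_num)]
        have := Real.exp_one_lt_d9
        linarith
    _ ≤ Real.log ((j:ℝ)+3) := Real.log_le_log (by norm_num) h3

lemma ww_pos (j : ℕ) : 0 < ww j := by
  have := log_j3_pos j
  unfold ww; positivity

lemma ww_le_one (j : ℕ) : ww j ≤ 1 := by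
  have h := log_j3_pos j
  rw [ww, div_le_one (by nlinarith)]
  nlinarith

lemma ww_anti {j m : ℕ} (h : j ≤ m) : ww m ≤ ww j := by
  have h1 := log_j3_pos j
  have h2 : Real.log ((j:ℝ)+3) ≤ Real.log ((m:ℝ)+3) := by
    apply Real.log_le_log (by positivity)
    have : (j:ℝ) ≤ m := Nat.cast_le.2 h
    linarith
  unfold ww
  apply one_div_le_one_div_of_le (by nlinarith)
  nlinarith

lemma weight_sum_small (δ : ℝ) (hδ : 0 < δ) :
    ∀ᶠ m : ℕ in atTop,
      ∑ j ∈ Icc 1 m, (ww j - ww m) ≤ δ * ((m:ℝ) * ww m) := by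
  have hL := log_m3_tendsto
  have hcomp := log_ratio_tendsto.comp hL
  have hev1 : ∀ᶠ m : ℕ in atTop, 2/δ ≤ Real.log ((m:ℝ)+3) := hL.eventually_ge_atTop _
  have hev2 : ∀ᶠ m : ℕ in atTop,
      (Real.log 2 + 3 * Real.log (Real.log ((m:ℝ)+3))) / Real.log ((m:ℝ)+3)
        < min (δ/16) (1/2) := hcomp.eventually_lt_const (by positivity)
  have hev3 : ∀ᶠ m : ℕ in atTop, 3 ≤ m := eventually_ge_atTop 3
  filter_upwards [hev1, hev2, hev3] with m h1 h2 h3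
  set L : ℝ := Real.log ((m:ℝ)+3) with hLdef
  have hm3 : (3:ℝ) ≤ (m:ℝ) := by exact_mod_cast h3
  have hL1 : 1 < L := log_j3_pos m
  have hL0 : 0 < L := by linarith
  have hwm : ww m = 1 / L^2 := rfl
  set X : ℝ := (m:ℝ) / L^3 with hXdef
  have hX0 : 0 < X := by positivity
  have h2a : Real.log 2 + 3 * Real.log L < (δ/16) * L := by
    have := (div_lt_iff₀ hL0).1 (lt_of_lt_of_le h2 (min_le_left _ _))
    linarith
  have h2b : Real.log 2 + 3 * Real.log L < L/2 := by
    have := (div_lt_iff₀ hL0).1 (lt_of_lt_of_le h2 (min_le_right _ _))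
    linarith
  have h1' : 2 ≤ δ * L := by
    have := (div_le_iff₀ hδ).1 h1
    linarith [this]
  -- split
  rw [← Finset.sum_filter_add_sum_filter_not (Icc 1 m) (fun j : ℕ => (j:ℝ) ≤ X)]
  have hpart1 : ∑ j ∈ (Icc 1 m).filter (fun j : ℕ => (j:ℝ) ≤ X), (ww j - ww m)
      ≤ (δ/2) * ((m:ℝ) * ww m) := by
    have hsub : (Icc 1 m).filter (fun j : ℕ => (j:ℝ) ≤ X) ⊆ Icc 1 (Nat.floor X) := by
      intro j hj
      simp only [mem_filter, mem_Icc] at hj ⊢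
      exact ⟨hj.1.1, Nat.le_floor hj.2⟩
    have hcard : (((Icc 1 m).filter (fun j : ℕ => (j:ℝ) ≤ X)).card : ℝ) ≤ X := by
      calc (((Icc 1 m).filter (fun j : ℕ => (j:ℝ) ≤ X)).card : ℝ)
          ≤ ((Icc 1 (Nat.floor X)).card : ℝ) := by
            exact_mod_cast Finset.card_le_card hsub
        _ = (Nat.floor X : ℝ) := by rw [Nat.card_Icc]; simp
        _ ≤ X := Nat.floor_le hX0.le
    calc ∑ j ∈ (Icc 1 m).filter (fun j : ℕ => (j:ℝ) ≤ X), (ww j - ww m)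
        ≤ ∑ _j ∈ (Icc 1 m).filter (fun j : ℕ => (j:ℝ) ≤ X), (1:ℝ) := by
          apply Finset.sum_le_sum
          intro j _
          have := ww_le_one j
          have := (ww_pos m).le
          linarith
      _ = (((Icc 1 m).filter (fun j : ℕ => (j:ℝ) ≤ X)).card : ℝ) := by simp
      _ ≤ X := hcard
      _ ≤ (δ/2) * ((m:ℝ) * ww m) := by
          have heq : (δ/2) * ((m:ℝ) * ww m) = (δ * L / 2) * X := by
            rw [hwm, hXdef]; field_simp
          rw [heq]
          nlinarith
  have hpart2 : ∑ j ∈ (Icc 1 m).filter (fun j : ℕ => ¬ (j:ℝ) ≤ X), (ww j - ww m)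
      ≤ (δ/2) * ((m:ℝ) * ww m) := by
    set l : ℝ := Real.log (X + 3) with hldef
    have hXm : X ≤ (m:ℝ) := by
      rw [hXdef]
      apply div_le_self (by linarith) (by nlinarith)
    have hlL : l ≤ L := Real.log_le_log (by positivity) (by linarith)
    have hgap : L - l ≤ Real.log 2 + 3 * Real.log L := by
      have hlogX : Real.log X = Real.log (m:ℝ) - 3 * Real.log L := by
        rw [hXdef, Real.log_div (by positivity) (by positivity), Real.log_pow]
        push_cast; ring
      have hlogm : L - Real.log 2 ≤ Real.log (m:ℝ) := by
        have : (((m:ℝ)+3)/2) ≤ (m:ℝ) := by linarith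
        have hh := Real.log_le_log (by positivity) this
        rw [Real.log_div (by positivity) (by norm_num)] at hh
        linarith
      have hXl : Real.log X ≤ l := Real.log_le_log hX0 (by linarith)
      linarith [hlogX ▸ hXl]
    have hlhalf : L/2 ≤ l := by linarith
    have hl0 : 0 < l := by linarith
    have hterm : ∀ j ∈ (Icc 1 m).filter (fun j : ℕ => ¬ (j:ℝ) ≤ X),
        ww j - ww m ≤ (δ/2) * ww m := by
      intro j hj
      simp only [mem_filter, mem_Icc, not_le] at hj
      have hlj : l ≤ Real.log ((j:ℝ)+3) :=
        Real.log_le_log (by positivity) (by linarith [hj.2])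
      have hjpos := log_j3_pos j
      have hwj : ww j ≤ 1 / l^2 := by
        rw [ww]
        apply one_div_le_one_div_of_le (by positivity)
        nlinarith
      have hkey : 1/l^2 - 1/L^2 ≤ (δ/2) * (1/L^2) := by
        rw [div_sub_div _ _ (by positivity) (by positivity), div_le_iff₀ (by positivity)]
        have expand : δ / 2 * (1 / L ^ 2) * (l ^ 2 * L ^ 2) = (δ/2) * l^2 := by
          field_simp
        rw [expand]
        have hd : L - l < δ/16 * L := lt_of_le_of_lt hgap h2a
        nlinarith [mul_le_mul_of_nonneg_right hd.le (by linarith : (0:ℝ) ≤ L + l),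
          mul_le_mul_of_nonneg_right hlL (by positivity : (0:ℝ) ≤ δ/16 * L),
          mul_le_mul_of_nonneg_left (mul_le_mul hlhalf hlhalf (by linarith) hl0.le)
            (by positivity : (0:ℝ) ≤ δ/2)]
      rw [hwm]
      linarith
    have hB : (0:ℝ) ≤ (δ/2) * ww m := mul_nonneg (by positivity) (ww_pos m).le
    calc ∑ j ∈ (Icc 1 m).filter (fun j : ℕ => ¬ (j:ℝ) ≤ X), (ww j - ww m)
        ≤ ∑ _j ∈ (Icc 1 m).filter (fun j : ℕ => ¬ (j:ℝ) ≤ X), ((δ/2) * ww m) :=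
          Finset.sum_le_sum hterm
      _ = (((Icc 1 m).filter (fun j : ℕ => ¬ (j:ℝ) ≤ X)).card : ℝ) * ((δ/2) * ww m) := by
          rw [Finset.sum_const, nsmul_eq_mul]
      _ ≤ (m:ℝ) * ((δ/2) * ww m) := by
          apply mul_le_mul_of_nonneg_right _ hB
          have : ((Icc 1 m).filter (fun j : ℕ => ¬ (j:ℝ) ≤ X)).card ≤ m := by
            calc ((Icc 1 m).filter (fun j : ℕ => ¬ (j:ℝ) ≤ X)).card
                ≤ (Icc 1 m).card := Finset.card_le_card (Finset.filter_subset _ _)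
              _ = m := by rw [Nat.card_Icc]; simp
          exact_mod_cast this
      _ = (δ/2) * ((m:ℝ) * ww m) := by ring
  linarith


lemma riemann_aux (f : ℝ → ℝ) (K : NNReal) (hf : LipschitzOnWith K f (Set.Icc 0 1))
    (m n : ℕ) (hm : 0 < m) (hnm : n ≤ m) :
    |(∑ j ∈ Icc 1 n, f ((j:ℝ)/m)) - (m:ℝ) * ∫ x in (0:ℝ)..((n:ℝ)/m), f x| ≤ (K:ℝ) := by
  have hm0 : (0:ℝ) < m := Nat.cast_pos.2 hm
  set a : ℕ → ℝ := fun i => (i:ℝ)/m with ha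
  have hmem : ∀ i : ℕ, i ≤ m → a i ∈ Set.Icc (0:ℝ) 1 := by
    intro i hi
    constructor
    · positivity
    · rw [ha]; simp only
      rw [div_le_one hm0]
      exact_mod_cast hi
  have hle : ∀ i : ℕ, a i ≤ a (i+1) := by
    intro i
    simp only [ha]
    gcongr
    push_cast; linarith
  have hintg : ∀ i, i < n → IntervalIntegrable f MeasureTheory.volume (a i) (a (i+1)) := by
    intro i hi
    apply ContinuousOn.intervalIntegrable
    apply hf.continuousOn.mono
    rw [Set.uIcc_of_le (hle i)]
    apply Set.Icc_subset_Icc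
    · exact (hmem i (by omega)).1
    · exact (hmem (i+1) (by omega)).2
  have key := intervalIntegral.sum_integral_adjacent_intervals hintg
  have ha0 : a 0 = 0 := by simp [ha]
  rw [ha0] at key
  have hS : (∑ j ∈ Icc 1 n, f ((j:ℝ)/m)) = ∑ i ∈ range n, f (a (i+1)) := by
    rw [← Finset.Ico_add_one_right_eq_Icc, Finset.sum_Ico_eq_sum_range]
    norm_num
    apply Finset.sum_congr rfl
    intro i _
    congr 2
    push_cast; ring
  have hlen : ∀ i : ℕ, a (i+1) - a i = 1/m := by
    intro i
    rw [ha]; simp only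
    rw [div_sub_div_same]
    push_cast; ring_nf
  have hterm : ∀ i ∈ range n, |f (a (i+1)) - (m:ℝ) * ∫ x in a i..a (i+1), f x| ≤ (K:ℝ)/m := by
    intro i hi
    have hi' : i < n := mem_range.1 hi
    have hc : a (i+1) ∈ Set.Icc (0:ℝ) 1 := hmem (i+1) (by omega)
    have hbound : ∀ x ∈ Set.uIoc (a i) (a (i+1)), ‖f (a (i+1)) - f x‖ ≤ (K:ℝ)/m := by
      intro x hx
      rw [Set.uIoc_of_le (hle i)] at hx
      have hx1 : x ∈ Set.Icc (0:ℝ) 1 := ⟨le_trans (hmem i (by omega)).1 hx.1.le, le_trans hx.2 hc.2⟩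
      have hd := hf.dist_le_mul (a (i+1)) hc x hx1
      rw [Real.dist_eq, Real.dist_eq] at hd
      have : |a (i+1) - x| ≤ 1/m := by
        rw [abs_of_nonneg (by linarith [hx.2])]
        have := hlen i
        have := hx.1
        linarith
      calc ‖f (a (i+1)) - f x‖ ≤ (K:ℝ) * |a (i+1) - x| := hd
        _ ≤ (K:ℝ) * (1/m) := by
            apply mul_le_mul_of_nonneg_left this K.2
        _ = (K:ℝ)/m := by ring
    have hnorm := intervalIntegral.norm_integral_le_of_norm_le_const hbound
    have hsub : (∫ x in a i..a (i+1), (f (a (i+1)) - f x))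
        = (a (i+1) - a i) * f (a (i+1)) - ∫ x in a i..a (i+1), f x := by
      rw [intervalIntegral.integral_sub intervalIntegrable_const (hintg i hi'),
        intervalIntegral.integral_const, smul_eq_mul]
    rw [hsub, hlen i] at hnorm
    rw [abs_of_pos (by positivity : (0:ℝ) < 1/(m:ℝ)), Real.norm_eq_abs] at hnorm
    have heq : f (a (i+1)) - (m:ℝ) * ∫ x in a i..a (i+1), f x
        = (m:ℝ) * (1/(m:ℝ) * f (a (i+1)) - ∫ x in a i..a (i+1), f x) := by
      field_simp
    rw [heq, abs_mul, abs_of_pos hm0]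
    calc (m:ℝ) * |1/(m:ℝ) * f (a (i+1)) - ∫ x in a i..a (i+1), f x|
        ≤ (m:ℝ) * ((K:ℝ)/m * (1/m)) := by
          apply mul_le_mul_of_nonneg_left _ hm0.le
          exact hnorm
      _ = (K:ℝ)/m := by field_simp
  calc |(∑ j ∈ Icc 1 n, f ((j:ℝ)/m)) - (m:ℝ) * ∫ x in (0:ℝ)..((n:ℝ)/m), f x|
      = |∑ i ∈ range n, (f (a (i+1)) - (m:ℝ) * ∫ x in a i..a (i+1), f x)| := by
        rw [Finset.sum_sub_distrib, ← Finset.mul_sum, key, hS]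
    _ ≤ ∑ i ∈ range n, |f (a (i+1)) - (m:ℝ) * ∫ x in a i..a (i+1), f x| :=
        Finset.abs_sum_le_sum_abs _ _
    _ ≤ ∑ _i ∈ range n, (K:ℝ)/m := Finset.sum_le_sum hterm
    _ = (n:ℝ) * ((K:ℝ)/m) := by rw [Finset.sum_const, card_range, nsmul_eq_mul]
    _ ≤ (K:ℝ) := by
        rw [mul_div_assoc'] -- n*K/m
        rw [div_le_iff₀ hm0]
        have h1 : (n:ℝ) ≤ m := Nat.cast_le.2 hnm
        have h2 : (0:ℝ) ≤ K := K.coe_nonneg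
        nlinarith


section helpers

lemma frac_le (C c : ℝ) (hC : 0 ≤ C) (hc : 0 ≤ c) : C * (c/(8*(C+1))) ≤ c/8 := by
  rw [mul_div_assoc', div_le_div_iff₀ (by positivity) (by norm_num)]
  nlinarith

lemma uIcc_sub (a b : ℝ) (ha : a ∈ Set.Icc (0:ℝ) 1) (hb : b ∈ Set.Icc (0:ℝ) 1) :
    Set.uIcc a b ⊆ Set.Icc (0:ℝ) 1 := by
  intro x hx
  rw [Set.mem_uIcc] at hx
  rcases hx with ⟨h1, h2⟩ | ⟨h1, h2⟩ <;>
    exact ⟨by rcases ha with ⟨c1,c2⟩; rcases hb with ⟨d1,d2⟩; linarith,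
           by rcases ha with ⟨c1,c2⟩; rcases hb with ⟨d1,d2⟩; linarith⟩

lemma int_abs_bound (f : ℝ → ℝ) (C a b : ℝ) (hC : ∀ x ∈ Set.Icc (0:ℝ) 1, |f x| ≤ C)
    (ha : a ∈ Set.Icc (0:ℝ) 1) (hb : b ∈ Set.Icc (0:ℝ) 1) :
    |∫ x in a..b, f x| ≤ C * |b - a| := by
  rw [← Real.norm_eq_abs]
  apply intervalIntegral.norm_integral_le_of_norm_le_const
  intro x hx
  have hx' : x ∈ Set.Icc (0:ℝ) 1 := by
    have h1 : a ⊓ b < x := hx.1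
    have h2 : x ≤ a ⊔ b := hx.2
    have := le_inf ha.1 hb.1
    have := sup_le ha.2 hb.2
    exact ⟨by linarith, by linarith⟩
  rw [Real.norm_eq_abs]
  exact hC x hx'

end helpers


theorem discrete_integral_comparison (F : Finset (ℝ → ℝ)) (C K : ℝ)
    (hbd : ∀ f ∈ F, ∀ x ∈ Set.Icc (0:ℝ) 1, |f x| ≤ C)
    (hlip : ∀ f ∈ F, LipschitzOnWith (Real.toNNReal K) f (Set.Icc (0:ℝ) 1))
    (hint : ∀ f ∈ F, (∫ x in (0:ℝ)..(1/2), f x) < ∫ x in (1/2:ℝ)..1, f x) :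
    ∃ (M : ℕ) (ε : ℝ), 0 < ε ∧
      ∀ m : ℕ, M < m → ∀ mstar : ℕ,
        ((1/2 - ε) * m < mstar ∧ (mstar : ℝ) < (1/2 + ε) * m) →
        ∀ f ∈ F,
          ∑ j ∈ Finset.Icc 1 mstar, f (j / m) / (Real.log (j + 3)) ^ 2 <
            ∑ j ∈ Finset.Icc (mstar + 1) m, f (j / m) / (Real.log (j + 3)) ^ 2 := by
  rcases F.eq_empty_or_nonempty with hF | hF
  · exact ⟨0, 1, one_pos, fun m _ ms _ f hf => absurd hf (by simp [hF])⟩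
  obtain ⟨f₀, hf₀0, hmin⟩ := F.exists_min_image
    (fun f => (∫ x in (1/2:ℝ)..1, f x) - ∫ x in (0:ℝ)..(1/2:ℝ), f x) hF
  set c : ℝ := (∫ x in (1/2:ℝ)..1, f₀ x) - ∫ x in (0:ℝ)..(1/2:ℝ), f₀ x with hcdef
  have hc : 0 < c := sub_pos.2 (hint f₀ hf₀0)
  have hC0 : 0 ≤ C :=
    le_trans (abs_nonneg _) (hbd f₀ hf₀0 0 ⟨le_refl _, zero_le_one⟩)
  set kk : ℝ := ((Real.toNNReal K : NNReal) : ℝ) with hkkdef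
  have hkk : 0 ≤ kk := NNReal.coe_nonneg _
  set ε : ℝ := min (c/(8*(C+1))) (1/4) with hεdef
  have hε : 0 < ε := lt_min (by positivity) (by norm_num)
  have hε14 : ε ≤ 1/4 := min_le_right _ _
  have hεc : ε ≤ c/(8*(C+1)) := min_le_left _ _
  obtain ⟨M₁, hM₁⟩ := Filter.eventually_atTop.1 (weight_sum_small (c/(8*(C+1))) (by positivity))
  set M₂ : ℕ := Nat.ceil ((8*kk)/c) with hM₂def
  refine ⟨max (max M₁ M₂) 4, ε, hε, ?_⟩
  intro m hm mstar ⟨hms1, hms2⟩ f hf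
  have hm4 : 4 < m := lt_of_le_of_lt (le_max_right _ _) hm
  have hm0 : 0 < m := by omega
  have hm0' : (0:ℝ) < m := by exact_mod_cast hm0
  have hmcast : (5:ℝ) ≤ m := by exact_mod_cast hm4
  have hwE := hM₁ m (le_of_lt (lt_of_le_of_lt (le_trans (le_max_left _ _) (le_max_left _ _)) hm))
  have hmM₂ : (8*kk)/c < m := by
    have h1 : M₂ < m := lt_of_le_of_lt (le_trans (le_max_right _ _) (le_max_left _ _)) hm
    have h2 : ((8*kk)/c : ℝ) ≤ M₂ := Nat.le_ceil _
    have h3 : (M₂:ℝ) < m := by exact_mod_cast h1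
    linarith
  have hcm : 8*kk < c*m := by
    rw [div_lt_iff₀ hc] at hmM₂
    linarith
  -- mstar bounds
  have hmsm : mstar < m := by
    have h1 : (mstar:ℝ) < (3/4)*m := lt_of_lt_of_le hms2 (by nlinarith)
    have h2 : (mstar:ℝ) < m := by linarith
    exact_mod_cast h2
  have hms1' : 1 ≤ mstar := by
    have h1 : (1/4)*(m:ℝ) ≤ (1/2-ε)*m := by nlinarith
    have h2 : (1:ℝ) ≤ mstar := by nlinarith
    exact_mod_cast h2
  -- t and its bounds
  set t : ℝ := (mstar:ℝ)/m with htdef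
  have ht01 : t ∈ Set.Icc (0:ℝ) 1 := by
    constructor
    · positivity
    · rw [htdef, div_le_one hm0']
      exact_mod_cast hmsm.le
  have htε : |t - 1/2| ≤ ε := by
    have h1 : 1/2 - ε < t := by rw [htdef, lt_div_iff₀ hm0']; exact hms1
    have h2 : t < 1/2 + ε := by rw [htdef, div_lt_iff₀ hm0']; exact hms2
    rw [abs_le]
    constructor <;> linarith
  have hhalf : (1/2:ℝ) ∈ Set.Icc (0:ℝ) 1 := by norm_num
  have hone : (1:ℝ) ∈ Set.Icc (0:ℝ) 1 := by norm_num
  have hzero : (0:ℝ) ∈ Set.Icc (0:ℝ) 1 := by norm_num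
  have hcont : ContinuousOn f (Set.Icc 0 1) := (hlip f hf).continuousOn
  have hI : ∀ a b : ℝ, a ∈ Set.Icc (0:ℝ) 1 → b ∈ Set.Icc (0:ℝ) 1 →
      IntervalIntegrable f MeasureTheory.volume a b := fun a b ha hb =>
    (hcont.mono (uIcc_sub a b ha hb)).intervalIntegrable
  -- Riemann sums
  set S₁ : ℝ := ∑ j ∈ Icc 1 mstar, f ((j:ℝ)/m) with hS₁def
  set S : ℝ := ∑ j ∈ Icc 1 m, f ((j:ℝ)/m) with hSdef
  have hR1 : |S₁ - (m:ℝ) * ∫ x in (0:ℝ)..t, f x| ≤ kk :=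
    riemann_aux f (Real.toNNReal K) (hlip f hf) m mstar hm0 hmsm.le
  have hR2 : |S - (m:ℝ) * ∫ x in (0:ℝ)..(1:ℝ), f x| ≤ kk := by
    have := riemann_aux f (Real.toNNReal K) (hlip f hf) m m hm0 le_rfl
    rwa [div_self (ne_of_gt hm0')] at this
  -- integral splits
  set I₁ : ℝ := ∫ x in (0:ℝ)..(1/2:ℝ), f x with hI₁def
  set I₂ : ℝ := ∫ x in (1/2:ℝ)..(1:ℝ), f x with hI₂def
  set J : ℝ := ∫ x in (1/2:ℝ)..t, f x with hJdef
  have hsplit1 : (∫ x in (0:ℝ)..t, f x) = I₁ + J :=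
    (intervalIntegral.integral_add_adjacent_intervals (hI 0 (1/2) hzero hhalf)
      (hI (1/2) t hhalf ht01)).symm
  have hsplit2 : (∫ x in (0:ℝ)..(1:ℝ), f x) = I₁ + I₂ :=
    (intervalIntegral.integral_add_adjacent_intervals (hI 0 (1/2) hzero hhalf)
      (hI (1/2) 1 hhalf hone)).symm
  have hmid : |J| ≤ C * ε := by
    calc |J| ≤ C * |t - 1/2| := int_abs_bound f C (1/2) t (hbd f hf) hhalf ht01
      _ ≤ C * ε := mul_le_mul_of_nonneg_left htε hC0
  have hgapf : c ≤ I₂ - I₁ := hmin f hf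
  -- key1
  have key1 : c*(m:ℝ) - 3*kk - 2*C*ε*(m:ℝ) ≤ S - 2*S₁ := by
    have q1 : S₁ - (m:ℝ)*(I₁ + J) ≤ kk := by
      have := (abs_le.1 hR1).2
      rwa [hsplit1] at this
    have q2 : -kk ≤ S - (m:ℝ)*(I₁ + I₂) := by
      have := (abs_le.1 hR2).1
      rwa [hsplit2] at this
    have q3 : J ≤ C*ε := (abs_le.1 hmid).2
    have q5 : (m:ℝ)*J ≤ (m:ℝ)*(C*ε) := mul_le_mul_of_nonneg_left q3 hm0'.le
    have q6 : (m:ℝ)*c ≤ (m:ℝ)*(I₂-I₁) := mul_le_mul_of_nonneg_left hgapf hm0'.le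
    nlinarith
  -- weighted sums
  set E : ℝ := ∑ j ∈ Icc 1 m, (ww j - ww m) with hEdef
  have hE0 : 0 ≤ E := Finset.sum_nonneg (fun j hj =>
    sub_nonneg.2 (ww_anti (mem_Icc.1 hj).2))
  have hW : 0 < ww m := ww_pos m
  have hgoal : ∀ s : Finset ℕ,
      ∑ j ∈ s, f ((j:ℝ)/(m:ℝ)) / (Real.log ((j:ℝ) + 3)) ^ 2
        = ∑ j ∈ s, f ((j:ℝ)/(m:ℝ)) * ww j :=
    fun s => Finset.sum_congr rfl (fun j _ => by rw [ww]; ring)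
  rw [hgoal, hgoal]
  set A : ℝ := ∑ j ∈ Icc 1 mstar, f ((j:ℝ)/(m:ℝ)) * ww j with hAdef
  set B : ℝ := ∑ j ∈ Icc (mstar+1) m, f ((j:ℝ)/(m:ℝ)) * ww j with hBdef
  set T : ℝ := ∑ j ∈ Icc 1 m, f ((j:ℝ)/(m:ℝ)) * ww j with hTdef
  have hABT : A + B = T := by
    rw [hAdef, hBdef, hTdef, show (1:ℕ) = 0 + 1 from rfl, Finset.Icc_add_one_left_eq_Ioc,
      Finset.Icc_add_one_left_eq_Ioc, zero_add, Finset.Icc_add_one_left_eq_Ioc]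
    exact Finset.sum_Ioc_consecutive _ (Nat.zero_le _) hmsm.le
  have hjmem : ∀ j : ℕ, j ≤ m → ((j:ℝ)/m) ∈ Set.Icc (0:ℝ) 1 := by
    intro j hj
    constructor
    · positivity
    · rw [div_le_one hm0']; exact_mod_cast hj
  have hA : A ≤ ww m * S₁ + C * E := by
    have step : A - ww m * S₁ ≤ C * E := by
      have e1 : A - ww m * S₁ = ∑ j ∈ Icc 1 mstar, f ((j:ℝ)/m) * (ww j - ww m) := by
        rw [hAdef, hS₁def, Finset.mul_sum, ← Finset.sum_sub_distrib]
        exact Finset.sum_congr rfl (fun j _ => by ring)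
      rw [e1, hEdef, Finset.mul_sum]
      calc ∑ j ∈ Icc 1 mstar, f ((j:ℝ)/m) * (ww j - ww m)
          ≤ ∑ j ∈ Icc 1 mstar, C * (ww j - ww m) := by
            apply Finset.sum_le_sum
            intro j hj
            have hjm : j ≤ m := le_trans (mem_Icc.1 hj).2 hmsm.le
            exact mul_le_mul_of_nonneg_right
              (le_trans (le_abs_self _) (hbd f hf _ (hjmem j hjm)))
              (sub_nonneg.2 (ww_anti hjm))
        _ ≤ ∑ j ∈ Icc 1 m, C * (ww j - ww m) := by
            apply Finset.sum_le_sum_of_subset_of_nonneg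
              (Finset.Icc_subset_Icc_right hmsm.le)
            intro j hj _
            exact mul_nonneg hC0 (sub_nonneg.2 (ww_anti (mem_Icc.1 hj).2))
    linarith
  have hT : ww m * S - C * E ≤ T := by
    have step : -(C * E) ≤ T - ww m * S := by
      have e1 : T - ww m * S = ∑ j ∈ Icc 1 m, f ((j:ℝ)/m) * (ww j - ww m) := by
        rw [hTdef, hSdef, Finset.mul_sum, ← Finset.sum_sub_distrib]
        exact Finset.sum_congr rfl (fun j _ => by ring)
      rw [e1, hEdef, Finset.mul_sum, ← Finset.sum_neg_distrib]
      apply Finset.sum_le_sum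
      intro j hj
      have hjm : j ≤ m := (mem_Icc.1 hj).2
      have habs := hbd f hf _ (hjmem j hjm)
      have h1 : -C ≤ f ((j:ℝ)/m) := by
        have := neg_abs_le (f ((j:ℝ)/m))
        linarith [abs_le.1 habs]
      calc -(C * (ww j - ww m)) = (-C) * (ww j - ww m) := by ring
        _ ≤ f ((j:ℝ)/m) * (ww j - ww m) :=
            mul_le_mul_of_nonneg_right h1 (sub_nonneg.2 (ww_anti hjm))
    linarith
  clear_value t S₁ S I₁ I₂ J E A B T c kk ε
  -- constants
  have hCe : 2*(C*ε) ≤ c/4 := by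
    have h1 : C*ε ≤ C*(c/(8*(C+1))) := mul_le_mul_of_nonneg_left hεc hC0
    have h2 := frac_le C c hC0 hc.le
    linarith
  have hCE : C * E ≤ (c/8) * ((m:ℝ) * ww m) := by
    have hmw : (0:ℝ) ≤ (m:ℝ) * ww m := mul_nonneg hm0'.le hW.le
    calc C * E ≤ C * ((c/(8*(C+1))) * ((m:ℝ) * ww m)) := by
          apply mul_le_mul_of_nonneg_left _ hC0
          exact hwE
      _ = (C * (c/(8*(C+1)))) * ((m:ℝ) * ww m) := by ring
      _ ≤ (c/8) * ((m:ℝ) * ww m) :=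
          mul_le_mul_of_nonneg_right (frac_le C c hC0 hc.le) hmw
  -- final combination
  have p1 : ww m * (c*(m:ℝ) - 3*kk - 2*C*ε*(m:ℝ)) ≤ ww m * (S - 2*S₁) :=
    mul_le_mul_of_nonneg_left key1 hW.le
  have p2 : 2*(C*ε)*(m:ℝ) ≤ (c/4)*(m:ℝ) := mul_le_mul_of_nonneg_right hCe hm0'.le
  have p5 : 3*kk*ww m < (3/8)*c*((m:ℝ)*ww m) := by
    have h := mul_pos hW (show (0:ℝ) < c*m - 8*kk by linarith)
    nlinarith [h]
  have q : ww m * (2*(C*ε)*(m:ℝ)) ≤ ww m * ((c/4)*(m:ℝ)) :=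
    mul_le_mul_of_nonneg_left p2 hW.le
  have p6 : 3*(C*E) ≤ 3*((c/8)*((m:ℝ)*ww m)) := by linarith only [hCE]
  linarith only [p1, q, p5, p6, hA, hT, hABT]
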